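/- Let A be a coin sequence containing at least one 1, written as A = 1^{h_0} 0^{t_1} 1^{h_1} ⋯ 0^{t_n} 1^{h_n}, define p_i = (t_1 + ⋯ + t_i) mod 2 and the parity sum S(A) = h_0 + Σ_{i=1}^n (−1)^{p_i} h_i − p_n. Then the residue class of S(A) modulo 3 being equal to 2 is independent of the choice of decomposition (h_0,…,h_n), (t_1,…,t_n) of A. -/

import Mathlib

/-- The coin sequence `1^{h 0} 0^{t 1} 1^{h 1} ⋯ 0^{t n} 1^{h n}`. -/
def buildSeq (n : ℕ) (h t : ℕ → ℕ) : List Bool :=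
  List.replicate (h 0) true ++
    ((List.range n).map
      (fun i => List.replicate (t (i + 1)) false ++ List.replicate (h (i + 1)) true)).flatten

/-- The parity of `t 1 + ⋯ + t i`. -/
def par (t : ℕ → ℕ) (i : ℕ) : ℕ :=
  (∑ j ∈ Finset.Icc 1 i, t j) % 2

/-- The parity sum `S = h₀ + ∑_{i=1}^n (-1)^{pᵢ} hᵢ - pₙ` of a decomposition. -/
def psum (n : ℕ) (h t : ℕ → ℕ) : ℤ :=
  (h 0 : ℤ) + (∑ i ∈ Finset.Icc 1 n, (-1 : ℤ) ^ (par t i) * (h i : ℤ)) - (par t n : ℤ)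

/-- Signed count of `true`s, starting with sign `s`, flipping sign at each `false`. -/
def valAux (s : ℤ) : List Bool → ℤ
  | [] => 0
  | true :: l => s + valAux s l
  | false :: l => valAux (-s) l

lemma valAux_append (s : ℤ) (l₁ l₂ : List Bool) :
    valAux s (l₁ ++ l₂) = valAux s l₁ + valAux (s * (-1) ^ (l₁.count false)) l₂ := by
  induction l₁ generalizing s with
  | nil => simp [valAux]
  | cons b l ih =>
    cases b with
    | true =>
      simp only [List.cons_append, valAux, List.count_cons, List.append_eq]
      rw [ih s]
      norm_num
      ring
    | false =>
      simp only [List.cons_append, valAux, List.count_cons, List.append_eq]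
      rw [ih (-s)]
      norm_num
      have hs : s * (-1 : ℤ) ^ (l.count false + 1) = -(s * (-1) ^ (l.count false)) := by ring
      rw [hs]

lemma valAux_replicate_true (s : ℤ) (k : ℕ) :
    valAux s (List.replicate k true) = s * k := by
  induction k with
  | zero => simp [valAux]
  | succ k ih => simp [List.replicate_succ, valAux, ih]; ring

lemma valAux_replicate_false (s : ℤ) (k : ℕ) :
    valAux s (List.replicate k false) = 0 := by
  induction k generalizing s with
  | zero => simp [valAux]
  | succ k ih => simp [List.replicate_succ, valAux, ih]

lemma buildSeq_succ (n : ℕ) (h t : ℕ → ℕ) :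
    buildSeq (n + 1) h t = buildSeq n h t ++
      (List.replicate (t (n + 1)) false ++ List.replicate (h (n + 1)) true) := by
  simp [buildSeq, List.range_succ, List.append_assoc]

lemma count_false_buildSeq (n : ℕ) (h t : ℕ → ℕ) :
    (buildSeq n h t).count false = ∑ i ∈ Finset.Icc 1 n, t i := by
  induction n with
  | zero => simp [buildSeq, List.count_replicate]
  | succ n ih =>
    rw [buildSeq_succ, List.count_append, List.count_append, ih,
      Finset.sum_Icc_succ_top (by omega : 1 ≤ n + 1)]
    simp [List.count_replicate]

lemma valAux_buildSeq (n : ℕ) (h t : ℕ → ℕ) :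
    valAux 1 (buildSeq n h t) =
      (h 0 : ℤ) + ∑ i ∈ Finset.Icc 1 n, (-1 : ℤ) ^ (∑ j ∈ Finset.Icc 1 i, t j) * (h i : ℤ) := by
  induction n with
  | zero => simp [buildSeq, valAux_replicate_true]
  | succ n ih =>
    rw [buildSeq_succ, valAux_append, ih, valAux_append, valAux_replicate_false,
      valAux_replicate_true, count_false_buildSeq,
      Finset.sum_Icc_succ_top (by omega : 1 ≤ n + 1),
      Finset.sum_Icc_succ_top (by omega : 1 ≤ n + 1)]
    simp [List.count_replicate, pow_add]
    ring

lemma psum_eq (n : ℕ) (h t : ℕ → ℕ) (A : List Bool) (hd : buildSeq n h t = A) :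
    psum n h t = valAux 1 A - ((A.count false) % 2 : ℕ) := by
  subst hd
  rw [valAux_buildSeq, count_false_buildSeq, psum]
  simp only [par, ← neg_one_pow_eq_pow_mod_two]

theorem psum_mod_three_well_defined (A : List Bool) (hA : true ∈ A)
    (n₁ n₂ : ℕ) (h₁ t₁ h₂ t₂ : ℕ → ℕ) (hn₁ : 1 ≤ n₁) (hn₂ : 1 ≤ n₂)
    (hd₁ : buildSeq n₁ h₁ t₁ = A) (hd₂ : buildSeq n₂ h₂ t₂ = A) :
    psum n₁ h₁ t₁ % 3 = 2 ↔ psum n₂ h₂ t₂ % 3 = 2 := by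
  rw [psum_eq n₁ h₁ t₁ A hd₁, psum_eq n₂ h₂ t₂ A hd₂]
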